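/- Let n and s be integers with s ≥ 3 and n ≥ 2s + 2. Let F be a stable 3-graph with vertex set [n]. If F has property U(s, 2s+1) and ν(∂F) ≤ s, then |F| ≤ max{ C(n−1, 2), (n−s−1)·C(s+1, 2) + C(s+1, 3), C(2s+1, 3) }. -/

import Mathlib

open Finset

/-- `F₁ ≺ F₂`: same size, and the `i`-th smallest element of `F₁` is at most
the `i`-th smallest element of `F₂`. -/
def PrecS (A B : Finset ℕ) : Prop :=
  A.card = B.card ∧
    ∀ i, i < A.card → (A.sort (· ≤ ·)).getD i 0 ≤ (B.sort (· ≤ ·)).getD i 0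

/-- A family of subsets of `[n] = {1,…,n}` is stable (shifted). -/
def IsStable (n : ℕ) (F : Finset (Finset ℕ)) : Prop :=
  ∀ A B : Finset ℕ, A ⊆ Finset.Icc 1 n → B ∈ F → PrecS A B → A ∈ F

/-- Property `U(s, q)`: any `s` edges (repetitions allowed) have union of size at most `q`. -/
def HasU (F : Finset (Finset ℕ)) (s q : ℕ) : Prop :=
  ∀ f : Fin s → Finset ℕ, (∀ i, f i ∈ F) → (Finset.univ.biUnion f).card ≤ q

/-- Matching number: the maximum size of a set of pairwise disjoint edges of `F`. -/
def matchNum (F : Finset (Finset ℕ)) : ℕ :=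
  (F.powerset.filter fun M => ∀ a ∈ M, ∀ b ∈ M, a ≠ b → Disjoint a b).sup Finset.card

/-- Shadow of a 3-uniform family: all 2-element subsets of its edges. -/
def shadow2 (F : Finset (Finset ℕ)) : Finset (Finset ℕ) :=
  F.biUnion fun f => f.powersetCard 2

/-- Deletion of the first `i` vertices: edges disjoint from `[i] = {1,…,i}`. -/
def del (F : Finset (Finset ℕ)) (i : ℕ) : Finset (Finset ℕ) :=
  F.filter fun e => Disjoint e (Finset.Icc 1 i)

/-! ### Auxiliary machinery -/

lemma sort_three {x y z : ℕ} (h1 : x < y) (h2 : y < z) :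
    ({x, y, z} : Finset ℕ).sort (· ≤ ·) = [x, y, z] := by
  rw [Finset.sort_insert, Finset.sort_insert, Finset.sort_singleton]
  · intro b hb; simp at hb; omega
  · simp; omega
  · intro b hb; simp at hb; rcases hb with h|h <;> omega
  · simp; omega

lemma card_three {x y z : ℕ} (h1 : x < y) (h2 : y < z) :
    ({x, y, z} : Finset ℕ).card = 3 :=
  Finset.card_eq_three.mpr ⟨x, y, z, by omega, by omega, by omega, rfl⟩

lemma exists_sorted {e : Finset ℕ} (h : e.card = 3) :
    ∃ a b c : ℕ, a < b ∧ b < c ∧ e = {a, b, c} := by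
  obtain ⟨a, b, c, hab, hac, hbc, rfl⟩ := Finset.card_eq_three.mp h
  have key : ∀ x y z : ℕ, x < y → y < z →
      ({a,b,c} : Finset ℕ) = {x,y,z} → ∃ p q r : ℕ, p < q ∧ q < r ∧ ({a,b,c} : Finset ℕ) = {p,q,r} :=
    fun x y z h1 h2 he => ⟨x, y, z, h1, h2, he⟩
  rcases Nat.lt_trichotomy a b with h1|h1|h1
  · rcases Nat.lt_trichotomy b c with h2|h2|h2
    · exact ⟨a, b, c, h1, h2, rfl⟩
    · omega
    · rcases Nat.lt_trichotomy a c with h3|h3|h3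
      · exact key a c b h3 h2 (by ext t; simp; tauto)
      · omega
      · exact key c a b h3 h1 (by ext t; simp; tauto)
  · omega
  · rcases Nat.lt_trichotomy a c with h3|h3|h3
    · exact key b a c h1 h3 (by ext t; simp; tauto)
    · omega
    · rcases Nat.lt_trichotomy b c with h2|h2|h2
      · exact key b c a h2 h3 (by ext t; simp; tauto)
      · omega
      · exact key c b a h2 h1 (by ext t; simp; tauto)

lemma stable_mem {n : ℕ} {F : Finset (Finset ℕ)} (hst : IsStable n F)
    {a b c x y z : ℕ} (hab : a < b) (hbc : b < c) (hmem : ({a,b,c} : Finset ℕ) ∈ F)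
    (hxy : x < y) (hyz : y < z) (hx : 1 ≤ x) (hzn : z ≤ n)
    (h1 : x ≤ a) (h2 : y ≤ b) (h3 : z ≤ c) : ({x,y,z} : Finset ℕ) ∈ F := by
  apply hst _ _ ?_ hmem ?_
  · intro t ht; simp at ht; simp [Finset.mem_Icc]; omega
  · constructor
    · rw [card_three hxy hyz, card_three hab hbc]
    · intro i hi
      rw [card_three hxy hyz] at hi
      rw [sort_three hxy hyz, sort_three hab hbc]
      interval_cases i <;> simpa

def lo3 (e : Finset ℕ) : ℕ := (e.sort (· ≤ ·)).getD 0 0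
def mid3 (e : Finset ℕ) : ℕ := (e.sort (· ≤ ·)).getD 1 0
def hi3 (e : Finset ℕ) : ℕ := (e.sort (· ≤ ·)).getD 2 0

lemma lo3_eq {a b c : ℕ} (h1 : a < b) (h2 : b < c) : lo3 {a,b,c} = a := by
  rw [lo3, sort_three h1 h2]; rfl
lemma mid3_eq {a b c : ℕ} (h1 : a < b) (h2 : b < c) : mid3 {a,b,c} = b := by
  rw [mid3, sort_three h1 h2]; rfl
lemma hi3_eq {a b c : ℕ} (h1 : a < b) (h2 : b < c) : hi3 {a,b,c} = c := by
  rw [hi3, sort_three h1 h2]; rfl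

lemma match_lb {s : ℕ} {F : Finset (Finset ℕ)}
    (hEdges : ∀ i, 1 ≤ i → i ≤ s + 1 → ∃ f ∈ F, ({i, 2*s+3-i} : Finset ℕ) ⊆ f) :
    s + 1 ≤ matchNum (shadow2 F) := by
  set M₀ : Finset (Finset ℕ) := (Icc 1 (s+1)).image (fun i => ({i, 2*s+3-i} : Finset ℕ)) with hM₀
  have hmemM₀ : ∀ p ∈ M₀, ∃ i, 1 ≤ i ∧ i ≤ s + 1 ∧ p = ({i, 2*s+3-i} : Finset ℕ) := by
    intro p hp
    simp only [hM₀, Finset.mem_image, Finset.mem_Icc] at hp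
    obtain ⟨i, ⟨h1, h2⟩, rfl⟩ := hp
    exact ⟨i, h1, h2, rfl⟩
  have hinj : Set.InjOn (fun i => ({i, 2*s+3-i} : Finset ℕ)) (Icc 1 (s+1)) := by
    intro i hi j hj hij
    simp only [Finset.coe_Icc, Set.mem_Icc] at hi hj
    have : i ∈ ({j, 2*s+3-j} : Finset ℕ) := by simp only at hij; rw [← hij]; simp
    simp at this; omega
  have hcard : M₀.card = s + 1 := by
    rw [hM₀, Finset.card_image_of_injOn hinj, Nat.card_Icc]; omega
  have hsub : M₀ ∈ (shadow2 F).powerset.filter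
      (fun M => ∀ a ∈ M, ∀ b ∈ M, a ≠ b → Disjoint a b) := by
    rw [Finset.mem_filter, Finset.mem_powerset]
    refine ⟨?_, ?_⟩
    · intro p hp
      obtain ⟨i, h1, h2, rfl⟩ := hmemM₀ p hp
      obtain ⟨f, hf, hsubf⟩ := hEdges i h1 h2
      simp only [shadow2, Finset.mem_biUnion]
      exact ⟨f, hf, Finset.mem_powersetCard.mpr ⟨hsubf, by
        rw [Finset.card_pair]; omega⟩⟩
    · intro p hp q hq hpq
      obtain ⟨i, hi1, hi2, rfl⟩ := hmemM₀ p hp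
      obtain ⟨j, hj1, hj2, rfl⟩ := hmemM₀ q hq
      have hij : i ≠ j := fun h => hpq (by rw [h])
      rw [Finset.disjoint_left]
      intro t ht; simp at ht ⊢; omega
  calc s + 1 = M₀.card := hcard.symm
    _ ≤ _ := Finset.le_sup hsub

lemma sum_helper (M : ℕ) (u v : ℤ) :
    (∑ k ∈ Finset.range M, (u + k) * (v - k)) * 6 =
      6*M*u*v + 3*(v-u)*M*(M-1) - M*(M-1)*(2*M-1) := by
  induction M with
  | zero => simp
  | succ m ih => rw [Finset.sum_range_succ, add_mul, ih]; push_cast; ring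

lemma eval_sum (lo hi N : ℕ) (h1 : 1 ≤ lo) (h2 : lo ≤ hi + 1) (h3 : hi ≤ N) :
    ((∑ b ∈ Icc lo hi, (b-1)*(N-b) : ℕ) : ℤ) * 6 =
      6*((hi:ℤ)+1-lo)*((lo:ℤ)-1)*((N:ℤ)-lo)
        + 3*(((N:ℤ)-lo)-((lo:ℤ)-1))*((hi:ℤ)+1-lo)*(((hi:ℤ)+1-lo)-1)
        - ((hi:ℤ)+1-lo)*(((hi:ℤ)+1-lo)-1)*(2*((hi:ℤ)+1-lo)-1) := by
  have hc : ((∑ b ∈ Icc lo hi, (b-1)*(N-b) : ℕ) : ℤ)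
      = ∑ b ∈ Icc lo hi, (((b:ℤ))-1)*((N:ℤ)-b) := by
    rw [Nat.cast_sum]
    refine Finset.sum_congr rfl ?_
    intro b hb
    simp only [Finset.mem_Icc] at hb
    have hb1 : 1 ≤ b := le_trans h1 hb.1
    have hbN : b ≤ N := le_trans hb.2 h3
    rw [Nat.cast_mul, Nat.cast_sub hb1, Nat.cast_sub hbN]
    norm_num
  rw [hc, ← Finset.Ico_add_one_right_eq_Icc, Finset.sum_Ico_eq_sum_range]
  have hre : ∀ k ∈ Finset.range (hi + 1 - lo),
      (((lo + k : ℕ) : ℤ) - 1) * ((N:ℤ) - (lo + k : ℕ))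
        = (((lo:ℤ)-1) + k) * (((N:ℤ)-lo) - k) := by
    intro k _; push_cast; ring
  rw [Finset.sum_congr rfl hre, sum_helper]
  have : ((hi + 1 - lo : ℕ) : ℤ) = (hi:ℤ) + 1 - lo := by omega
  rw [this]

lemma choose2 (m : ℕ) : ((m+1).choose 2 : ℤ) * 2 = (m+1) * m := by
  induction m with
  | zero => rfl
  | succ k ih =>
      have : (k+2).choose 2 = (k+1).choose 1 + (k+1).choose 2 := Nat.choose_succ_succ (k+1) 1
      rw [this]; push_cast [Nat.choose_one_right]; push_cast at ih; linarith

lemma choose3 (m : ℕ) : ((m+2).choose 3 : ℤ) * 6 = (m+2) * (m+1) * m := by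
  induction m with
  | zero => rfl
  | succ k ih =>
      have : (k+3).choose 3 = (k+2).choose 2 + (k+2).choose 3 := Nat.choose_succ_succ (k+2) 2
      rw [this]; push_cast
      have h2 := choose2 (k+1); push_cast at h2 ih; linarith

lemma keyG (s p : ℤ) (hs : 3 ≤ s) (hp : 1 ≤ p) (hps : p ≤ s) :
    0 ≤ 3*p - 3*p^2 + 3*s - 6*s*p + 12*s*p^2 - 6*s*p^3 + 3*s^2 - 12*s^2*p
      - 6*s^2*p^3 + 48*s^3*p - 30*s^3*p^2 + 36*s^4*p := by
  nlinarith [mul_nonneg (mul_nonneg (sub_nonneg.2 hps) (by linarith : (0:ℤ) ≤ p)) (by linarith : (0:ℤ) ≤ s),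
    mul_nonneg (sub_nonneg.2 hps) (by positivity : (0:ℤ) ≤ s*s),
    mul_nonneg (mul_nonneg (sub_nonneg.2 hps) (sub_nonneg.2 hps)) (by linarith : (0:ℤ) ≤ s),
    mul_pos (by linarith : (0:ℤ) < p) (by linarith : (0:ℤ) < s),
    sq_nonneg (p-1), sq_nonneg (s-p), sq_nonneg (s*p - p), sq_nonneg (s*p-s), sq_nonneg (s-1)]

lemma keyArith (s i n X : ℤ) (hs : 3 ≤ s) (hi : 2 ≤ i) (hi' : i ≤ s + 1)
    (hn : 2*s + 2 ≤ n)
    (hX : X = (6*(i-2)*1*(n-2) + 3*((n-2)-1)*(i-2)*((i-2)-1) - (i-2)*((i-2)-1)*(2*(i-2)-1))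
      + (6*(2*s+3-2*i)*(i-1)*(2*s+2-2*i) + 3*((2*s+2-2*i)-(i-1))*(2*s+3-2*i)*((2*s+3-2*i)-1)
        - (2*s+3-2*i)*((2*s+3-2*i)-1)*(2*(2*s+3-2*i)-1))) :
    X ≤ (2*s+1)*(2*s)*(2*s-1) ∨ X ≤ 3*(n-s-1)*(s+1)*s + (s+1)*s*(s-1) := by
  by_cases hA : X ≤ (2*s+1)*(2*s)*(2*s-1)
  · exact Or.inl hA
  push_neg at hA
  right
  rcases eq_or_lt_of_le hi with hi2 | hi3
  · exfalso
    rw [← hi2] at hX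
    nlinarith [mul_nonneg (by linarith : (0:ℤ) ≤ s) (by linarith : (0:ℤ) ≤ 2*s-1)]
  · have hp : 1 ≤ i - 1 := by omega
    have hps : i - 1 ≤ s := by omega
    have hG := keyG s (i-1) hs hp hps
    have hD : 0 ≤ 3*((s+1)*s - (i-1)*(i-2)) := by nlinarith
    have hprod : 0 ≤ 3*((s+1)*s - (i-1)*(i-2)) * (X - (2*s+1)*(2*s)*(2*s-1) - 1) :=
      mul_nonneg hD (by linarith)
    have hid : 3*(i-1)*(i-2)*((3*(n-s-1)*(s+1)*s + (s+1)*s*(s-1)) - X)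
        = 3*((s+1)*s - (i-1)*(i-2)) * (X - (2*s+1)*(2*s)*(2*s-1) - 1)
          + (3*(i-1) - 3*(i-1)^2 + 3*s - 6*s*(i-1) + 12*s*(i-1)^2 - 6*s*(i-1)^3 + 3*s^2 - 12*s^2*(i-1)
            - 6*s^2*(i-1)^3 + 48*s^3*(i-1) - 30*s^3*(i-1)^2 + 36*s^4*(i-1)) := by
      rw [hX]; ring
    have h7 : 0 ≤ 3*(i-1)*(i-2)*((3*(n-s-1)*(s+1)*s + (s+1)*s*(s-1)) - X) := by
      rw [hid]; linarith
    have hpp : 0 < (i-1)*(i-2) := by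
      apply mul_pos <;> omega
    nlinarith [h7, hpp]

lemma count_main {n s i : ℕ} {F : Finset (Finset ℕ)}
    (hF : ∀ e ∈ F, e ⊆ Finset.Icc 1 n ∧ e.card = 3)
    (hi2 : 2 ≤ i) (hi' : i ≤ s + 1) (hn : 2*s + 2 ≤ n)
    (hQ : ∀ e ∈ F, i ≤ mid3 e → hi3 e ≤ 2*s + 2 - i) :
    F.card ≤ (∑ b ∈ Icc 2 (i-1), (b-1)*(n-b))
      + ∑ b ∈ Icc i (2*s+2-i), (b-1)*((2*s+2-i)-b) := by
  set m := 2*s + 2 - i with hm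
  have hdec : ∀ e ∈ F, ∃ a b c : ℕ, a < b ∧ b < c ∧ e = {a,b,c} ∧ 1 ≤ a ∧ c ≤ n := by
    intro e he
    obtain ⟨hsub, hcard⟩ := hF e he
    obtain ⟨a, b, c, h1, h2, rfl⟩ := exists_sorted hcard
    have ha : a ∈ Finset.Icc 1 n := hsub (by simp)
    have hc : c ∈ Finset.Icc 1 n := hsub (by simp)
    simp only [Finset.mem_Icc] at ha hc
    exact ⟨a, b, c, h1, h2, rfl, ha.1, hc.2⟩
  have hmid : ∀ e ∈ F, mid3 e ∈ Icc 2 n := by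
    intro e he
    obtain ⟨a, b, c, h1, h2, rfl, ha, hc⟩ := hdec e he
    rw [mid3_eq h1 h2]
    simp only [Finset.mem_Icc]; omega
  have hfib := Finset.card_eq_sum_card_fiberwise hmid
  have hfibb : ∀ b ∈ Icc 2 n, (F.filter (fun e => mid3 e = b)).card
      ≤ (b-1) * ((if b < i then n else m) - b) := by
    intro b hb
    simp only [Finset.mem_Icc] at hb
    set cap := if b < i then n else m with hcap
    have hle := Finset.card_le_card_of_injOn
      (s := F.filter (fun e => mid3 e = b))
      (t := Finset.Icc 1 (b-1) ×ˢ Finset.Icc (b+1) cap) (fun e => (lo3 e, hi3 e)) ?_ ?_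
    · calc (F.filter (fun e => mid3 e = b)).card
          ≤ (Finset.Icc 1 (b-1) ×ˢ Finset.Icc (b+1) cap).card := hle
        _ = (b-1) * (cap - b) := by
            rw [Finset.card_product, Nat.card_Icc, Nat.card_Icc]
            congr 1 <;> omega
    · intro e he
      simp only [Finset.mem_coe, Finset.mem_filter] at he
      obtain ⟨heF, heb⟩ := he
      obtain ⟨a, b', c, h1, h2, rfl, ha, hc⟩ := hdec _ heF
      rw [mid3_eq h1 h2] at heb
      subst heb
      simp only [lo3_eq h1 h2, hi3_eq h1 h2, Finset.mem_coe, Finset.mem_product, Finset.mem_Icc]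
      refine ⟨⟨ha, by omega⟩, by omega, ?_⟩
      rw [hcap]
      split_ifs with hbi
      · exact hc
      · push_neg at hbi
        have := hQ _ heF (by rw [mid3_eq h1 h2]; omega)
        rw [hi3_eq h1 h2] at this; omega
    · intro e he e' he' heq
      simp only [Finset.coe_filter, Set.mem_setOf_eq] at he he'
      obtain ⟨a, b1, c, h1, h2, rfl, _, _⟩ := hdec _ he.1
      obtain ⟨a', b1', c', h1', h2', rfl, _, _⟩ := hdec _ he'.1
      rw [mid3_eq h1 h2] at he; rw [mid3_eq h1' h2'] at he'
      simp only [lo3_eq h1 h2, hi3_eq h1 h2, lo3_eq h1' h2', hi3_eq h1' h2',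
        Prod.mk.injEq] at heq
      obtain ⟨rfl, rfl⟩ := heq
      rw [he.2, ← he'.2]
  have hsum1 : F.card ≤ ∑ b ∈ Icc 2 n, (b-1) * ((if b < i then n else m) - b) := by
    rw [hfib]; exact Finset.sum_le_sum hfibb
  have hun : Icc 2 (i-1) ∪ Icc i n = Icc 2 n := by
    ext t; simp only [Finset.mem_union, Finset.mem_Icc]; omega
  have hdis : Disjoint (Icc 2 (i-1)) (Icc i n) := by
    rw [Finset.disjoint_left]
    intro t ht ht'
    simp only [Finset.mem_Icc] at ht ht'; omega
  have hsplit : ∑ b ∈ Icc 2 n, (b-1) * ((if b < i then n else m) - b)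
      = (∑ b ∈ Icc 2 (i-1), (b-1)*(n-b)) + ∑ b ∈ Icc i n, (b-1)*(m-b) := by
    rw [← hun, Finset.sum_union hdis]
    congr 1
    · refine Finset.sum_congr rfl ?_
      intro b hb; simp only [Finset.mem_Icc] at hb
      rw [if_pos (by omega)]
    · refine Finset.sum_congr rfl ?_
      intro b hb; simp only [Finset.mem_Icc] at hb
      rw [if_neg (by omega)]
  have hm_le : m ≤ n := by omega
  have htrunc : ∑ b ∈ Icc i m, (b-1)*(m-b) = ∑ b ∈ Icc i n, (b-1)*(m-b) := by
    apply Finset.sum_subset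
    · exact Finset.Icc_subset_Icc_right hm_le
    · intro x hx hx'
      simp only [Finset.mem_Icc] at hx hx'
      have : m - x = 0 := by omega
      rw [this, Nat.mul_zero]
  omega

set_option maxHeartbeats 1000000 in
/-- Lemma 3.3: the case nu(shadow F) ≤ s. -/
theorem case_shadow_le (n s : ℕ) (hs : 3 ≤ s) (hn : 2 * s + 2 ≤ n)
    (F : Finset (Finset ℕ))
    (hF : ∀ e ∈ F, e ⊆ Finset.Icc 1 n ∧ e.card = 3)
    (hst : IsStable n F)
    (hU : HasU F s (2 * s + 1))
    (hnus : matchNum (shadow2 F) ≤ s) :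
    F.card ≤ max (Nat.choose (n - 1) 2)
      (max ((n - s - 1) * Nat.choose (s + 1) 2 + Nat.choose (s + 1) 3)
        (Nat.choose (2 * s + 1) 3)) := by
  classical
  by_cases hQ : ∃ i, 1 ≤ i ∧ i ≤ s + 1 ∧ ∀ e ∈ F, i ≤ mid3 e → hi3 e ≤ 2*s + 2 - i
  · obtain ⟨i, hi1, hi2, hQi⟩ := hQ
    rcases Nat.lt_or_ge i 2 with hilt | hige
    · -- i = 1 : every edge is inside [2s+1]
      have hi1' : i = 1 := by omega
      subst hi1'
      have hsub : F ⊆ (Finset.Icc 1 (2*s+1)).powersetCard 3 := by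
        intro e he
        obtain ⟨hsubn, hcard⟩ := hF e he
        obtain ⟨a, b, c, h1, h2, rfl⟩ := exists_sorted hcard
        have ha : a ∈ Finset.Icc 1 n := hsubn (by simp)
        simp only [Finset.mem_Icc] at ha
        have hc := hQi _ he (by rw [mid3_eq h1 h2]; omega)
        rw [hi3_eq h1 h2] at hc
        rw [Finset.mem_powersetCard]
        refine ⟨?_, hcard⟩
        intro t ht
        simp only [Finset.mem_insert, Finset.mem_singleton] at ht
        simp only [Finset.mem_Icc]
        omega
      have hb : F.card ≤ (2*s+1).choose 3 := by
        calc F.card ≤ ((Finset.Icc 1 (2*s+1)).powersetCard 3).card := Finset.card_le_card hsub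
          _ = (2*s+1).choose 3 := by
              rw [Finset.card_powersetCard, Nat.card_Icc]
              have h : 2*s+1+1-1 = 2*s+1 := by omega
              rw [h]
      exact le_trans hb (le_trans (le_max_right _ _) (le_max_right _ _))
    · -- 2 ≤ i ≤ s+1
      have hcount := count_main hF hige hi2 hn hQi
      set m := 2*s + 2 - i with hm
      have e1 := eval_sum 2 (i-1) n (by norm_num) (by omega) (by omega)
      have e2 := eval_sum i m m (by omega) (by omega) (le_refl m)
      have c1 : ((i-1 : ℕ) : ℤ) = (i:ℤ) - 1 := by
        rw [Nat.cast_sub (by omega : 1 ≤ i)]; norm_num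
      have c2 : ((m : ℕ) : ℤ) = 2*(s:ℤ) + 2 - i := by
        rw [hm, Nat.cast_sub (by omega : i ≤ 2*s+2)]; push_cast; ring
      rw [c1] at e1
      rw [c2] at e2
      have hX6 : (F.card : ℤ) * 6 ≤
          (6*((i:ℤ)-2)*1*((n:ℤ)-2) + 3*(((n:ℤ)-2)-1)*((i:ℤ)-2)*(((i:ℤ)-2)-1)
              - ((i:ℤ)-2)*(((i:ℤ)-2)-1)*(2*((i:ℤ)-2)-1))
            + (6*(2*(s:ℤ)+3-2*(i:ℤ))*((i:ℤ)-1)*(2*(s:ℤ)+2-2*(i:ℤ))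
              + 3*((2*(s:ℤ)+2-2*(i:ℤ))-((i:ℤ)-1))*(2*(s:ℤ)+3-2*(i:ℤ))*((2*(s:ℤ)+3-2*(i:ℤ))-1)
              - (2*(s:ℤ)+3-2*(i:ℤ))*((2*(s:ℤ)+3-2*(i:ℤ))-1)*(2*(2*(s:ℤ)+3-2*(i:ℤ))-1)) := by
        have hc : (F.card : ℤ) ≤ ((∑ b ∈ Icc 2 (i-1), (b-1)*(n-b) : ℕ) : ℤ)
            + ((∑ b ∈ Icc i m, (b-1)*(m-b) : ℕ) : ℤ) := by
          exact_mod_cast hcount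
        push_cast at e1 e2 hc ⊢
        linarith [e1, e2, hc]
      have hdj := keyArith (s:ℤ) (i:ℤ) (n:ℤ)
        ((6*((i:ℤ)-2)*1*((n:ℤ)-2) + 3*(((n:ℤ)-2)-1)*((i:ℤ)-2)*(((i:ℤ)-2)-1)
              - ((i:ℤ)-2)*(((i:ℤ)-2)-1)*(2*((i:ℤ)-2)-1))
            + (6*(2*(s:ℤ)+3-2*(i:ℤ))*((i:ℤ)-1)*(2*(s:ℤ)+2-2*(i:ℤ))
              + 3*((2*(s:ℤ)+2-2*(i:ℤ))-((i:ℤ)-1))*(2*(s:ℤ)+3-2*(i:ℤ))*((2*(s:ℤ)+3-2*(i:ℤ))-1)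
              - (2*(s:ℤ)+3-2*(i:ℤ))*((2*(s:ℤ)+3-2*(i:ℤ))-1)*(2*(2*(s:ℤ)+3-2*(i:ℤ))-1)))
        (by exact_mod_cast hs) (by exact_mod_cast hige) (by exact_mod_cast hi2)
        (by exact_mod_cast hn) rfl
      rcases hdj with hdj | hdj
      · have h3 := choose3 (2*s-1)
        have he3 : 2*s-1+2 = 2*s+1 := by omega
        rw [he3] at h3
        have hcast3 : ((2*s-1 : ℕ) : ℤ) = 2*(s:ℤ) - 1 := by
          rw [Nat.cast_sub (by omega : 1 ≤ 2*s)]; push_cast; ring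
        rw [hcast3] at h3
        have hfin : (F.card : ℤ) ≤ (((2*s+1).choose 3 : ℕ) : ℤ) := by linarith
        have : F.card ≤ (2*s+1).choose 3 := by exact_mod_cast hfin
        exact le_trans this (le_trans (le_max_right _ _) (le_max_right _ _))
      · have h2 := choose2 s
        have h3 := choose3 (s-1)
        have he3 : s-1+2 = s+1 := by omega
        rw [he3] at h3
        have hcast3 : ((s-1 : ℕ) : ℤ) = (s:ℤ) - 1 := by
          rw [Nat.cast_sub (by omega : 1 ≤ s)]; norm_num
        rw [hcast3] at h3
        have hcns : ((n - s - 1 : ℕ) : ℤ) = (n:ℤ) - s - 1 := by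
          rw [Nat.sub_sub, Nat.cast_sub (by omega : s + 1 ≤ n)]; push_cast; ring
        have h2' : ((n:ℤ)-s-1) * (((s+1).choose 2 : ℕ) : ℤ) * 2
            = ((n:ℤ)-s-1) * (((s:ℤ)+1)*s) := by
          rw [mul_assoc, h2]
        have hfin : (F.card : ℤ) ≤ (((n - s - 1) * (s+1).choose 2 + (s+1).choose 3 : ℕ) : ℤ) := by
          push_cast [hcns]
          nlinarith [hdj, h2', h3, hX6]
        have : F.card ≤ (n - s - 1) * (s+1).choose 2 + (s+1).choose 3 := by exact_mod_cast hfin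
        exact le_trans this (le_trans (le_max_left _ _) (le_max_right _ _))
  · -- no good i : build a large matching, contradiction
    push_neg at hQ
    exfalso
    have hEdges : ∀ j, 1 ≤ j → j ≤ s + 1 → ∃ f ∈ F, ({j, 2*s+3-j} : Finset ℕ) ⊆ f := by
      intro j hj1 hj2
      obtain ⟨e, he, hmid, hhi⟩ := hQ j hj1 hj2
      obtain ⟨hsubn, hcard⟩ := hF e he
      obtain ⟨a, b, c, h1, h2, rfl⟩ := exists_sorted hcard
      have ha : a ∈ Finset.Icc 1 n := hsubn (by simp)
      simp only [Finset.mem_Icc] at ha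
      rw [mid3_eq h1 h2] at hmid
      rw [hi3_eq h1 h2] at hhi
      have hf : ({1, max j 2, 2*s+3-j} : Finset ℕ) ∈ F := by
        apply stable_mem hst h1 h2 he (by omega) (by omega) (by omega) (by omega)
          (by omega) (by omega) (by omega)
      refine ⟨_, hf, ?_⟩
      intro t ht
      simp only [Finset.mem_insert, Finset.mem_singleton] at ht ⊢
      omega
    have := match_lb hEdges
    omega
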